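/- For every temporal RTL formula φ, every map R : ℝ≥0 → 2^(ℝⁿ), and every time t ∈ ℝ≥0: if P(R, φ, t) < 0 then (R, t) ⊭ φ, and if (R, t) ⊭ φ then P(R, φ, t) ≤ 0. (Soundness and completeness of the quantitative semantics of RTL, part 2 of Theorem 2.) -/
import Mathlib


open scoped NNReal

/-- Propositional RTL formulae over states in `ℝⁿ`. -/
inductive PropRTL (n : ℕ) : Type where
  | tt : PropRTL n
  | atom : ((Fin n → ℝ) → ℝ) → PropRTL n
  | not : PropRTL n → PropRTL n
  | and : PropRTL n → PropRTL n → PropRTL n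

/-- Satisfaction of a propositional RTL formula by a state `x`. -/
def PropSat {n : ℕ} (x : Fin n → ℝ) : PropRTL n → Prop
  | PropRTL.tt => True
  | PropRTL.atom h => 0 ≤ h x
  | PropRTL.not ψ => ¬ PropSat x ψ
  | PropRTL.and ψ₁ ψ₂ => PropSat x ψ₁ ∧ PropSat x ψ₂

/-- Quantitative semantics `ϱ(x, ψ)` of a propositional RTL formula, valued in the
extended reals. -/
noncomputable def varrho {n : ℕ} (x : Fin n → ℝ) : PropRTL n → EReal
  | PropRTL.tt => ⊤
  | PropRTL.atom h => (h x : EReal)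
  | PropRTL.not ψ => - varrho x ψ
  | PropRTL.and ψ₁ ψ₂ => min (varrho x ψ₁) (varrho x ψ₂)

/-- Temporal RTL formulae over maps `R : ℝ≥0 → 2^(ℝⁿ)`. -/
inductive TempRTL (n : ℕ) : Type where
  | all : PropRTL n → TempRTL n
  | or : TempRTL n → TempRTL n → TempRTL n
  | and : TempRTL n → TempRTL n → TempRTL n
  | next : ℝ≥0 → TempRTL n → TempRTL n

/-- Satisfaction `(R, t) ⊨ φ` of a temporal RTL formula. -/
def TempSat {n : ℕ} (R : ℝ≥0 → Set (Fin n → ℝ)) : TempRTL n → ℝ≥0 → Prop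
  | TempRTL.all ψ, t => ∀ x ∈ R t, PropSat x ψ
  | TempRTL.or φ₁ φ₂, t => TempSat R φ₁ t ∨ TempSat R φ₂ t
  | TempRTL.and φ₁ φ₂, t => TempSat R φ₁ t ∧ TempSat R φ₂ t
  | TempRTL.next a φ, t => TempSat R φ (t + a)

/-- Quantitative semantics `P(R, φ, t)` of a temporal RTL formula, valued in the
extended reals (the infimum over an empty set is `+∞`). -/
noncomputable def RTLrob {n : ℕ} (R : ℝ≥0 → Set (Fin n → ℝ)) : TempRTL n → ℝ≥0 → EReal
  | TempRTL.all ψ, t => ⨅ x ∈ R t, varrho x ψ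
  | TempRTL.or φ₁ φ₂, t => max (RTLrob R φ₁ t) (RTLrob R φ₂ t)
  | TempRTL.and φ₁ φ₂, t => min (RTLrob R φ₁ t) (RTLrob R φ₂ t)
  | TempRTL.next a φ, t => RTLrob R φ (t + a)

lemma eneg_pos {a : EReal} : 0 < -a ↔ a < 0 := by
  rw [← neg_zero, EReal.neg_lt_neg_iff, neg_zero]

lemma eneg_nonneg {a : EReal} : 0 ≤ -a ↔ a ≤ 0 := by
  rw [← neg_zero, EReal.neg_le_neg_iff, neg_zero]

lemma prop_quant_aux {n : ℕ} (x : Fin n → ℝ) (ψ : PropRTL n) :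
    (0 < varrho x ψ → PropSat x ψ) ∧ (PropSat x ψ → 0 ≤ varrho x ψ) := by
  induction ψ with
  | tt => simp [varrho, PropSat]
  | atom h =>
    constructor
    · intro hlt
      simp only [PropSat]
      simp only [varrho] at hlt
      exact_mod_cast hlt.le
    · intro hs
      simp only [PropSat] at hs
      simp only [varrho]
      exact_mod_cast hs
  | not ψ ih =>
    constructor
    · intro hlt
      simp only [PropSat]
      simp only [varrho, eneg_pos] at hlt
      intro hs
      exact absurd (ih.2 hs) (not_le.2 hlt)
    · intro hns
      simp only [PropSat, not_not] at hns
      simp only [varrho, eneg_nonneg]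
      by_contra h
      exact hns (ih.1 (not_le.1 h))
  | and ψ₁ ψ₂ ih₁ ih₂ =>
    constructor
    · intro hlt
      simp only [varrho, lt_min_iff] at hlt
      exact ⟨ih₁.1 hlt.1, ih₂.1 hlt.2⟩
    · intro hs
      simp only [varrho, le_min_iff]
      exact ⟨ih₁.2 hs.1, ih₂.2 hs.2⟩

/-- Soundness and completeness of the quantitative semantics of RTL,
part 2 of Theorem 2. -/
theorem temp_quant_sound_complete_neg {n : ℕ} (φ : TempRTL n)
    (R : ℝ≥0 → Set (Fin n → ℝ)) (t : ℝ≥0) :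
    (RTLrob R φ t < 0 → ¬ TempSat R φ t) ∧ (¬ TempSat R φ t → RTLrob R φ t ≤ 0) := by
  induction φ generalizing t with
  | all ψ =>
    constructor
    · intro hlt hs
      have : (0 : EReal) ≤ ⨅ x ∈ R t, varrho x ψ :=
        le_iInf₂ fun x hx => (prop_quant_aux x ψ).2 (hs x hx)
      exact absurd hlt (not_lt.2 this)
    · intro hns
      simp only [TempSat, not_forall] at hns
      obtain ⟨x, hx, hxns⟩ := hns
      have h1 : varrho x ψ ≤ 0 := by
        by_contra h
        exact hxns ((prop_quant_aux x ψ).1 (not_le.1 h))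
      calc RTLrob R (TempRTL.all ψ) t ≤ varrho x ψ := iInf₂_le x hx
        _ ≤ 0 := h1
  | or φ₁ φ₂ ih₁ ih₂ =>
    constructor
    · intro hlt hs
      simp only [RTLrob, max_lt_iff] at hlt
      rcases hs with h | h
      exacts [(ih₁ t).1 hlt.1 h, (ih₂ t).1 hlt.2 h]
    · intro hns
      simp only [TempSat, not_or] at hns
      simp only [RTLrob, max_le_iff]
      exact ⟨(ih₁ t).2 hns.1, (ih₂ t).2 hns.2⟩
  | and φ₁ φ₂ ih₁ ih₂ =>
    constructor
    · intro hlt hs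
      simp only [RTLrob, min_lt_iff] at hlt
      rcases hlt with h | h
      exacts [(ih₁ t).1 h hs.1, (ih₂ t).1 h hs.2]
    · intro hns
      simp only [TempSat, not_and_or] at hns
      simp only [RTLrob, min_le_iff]
      rcases hns with h | h
      exacts [Or.inl ((ih₁ t).2 h), Or.inr ((ih₂ t).2 h)]
  | next a φ ih =>
    exact ih (t + a)
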